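/- For the depolarizing channel E(ρ) = (p/2)I + (1−p)ρ on single-qubit density matrices, every entry of E(ρ) is within a multiplicative factor bounded by the corresponding QDP guarantee on measurement probabilities: for any PSD matrix M with 0 ≤ M ≤ I and any two density matrices ρ, σ with ½‖ρ−σ‖₁ ≤ d, Tr(M·E(ρ)) ≤ (1 + ((1−p)/p)·2d)·Tr(M·E(σ)). -/

import Mathlib

open Matrix
open scoped ComplexOrder

/-- Trace norm (sum of singular values) of a 2×2 complex matrix. -/
noncomputable def traceNorm (A : Matrix (Fin 2) (Fin 2) ℂ) : ℝ :=
  ∑ i, Real.sqrt ((Matrix.isHermitian_conjTranspose_mul_self A).eigenvalues i)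

/-- The depolarizing channel on 2×2 matrices (acting on trace-one states,
`E(ρ) = (p/2)·I + (1−p)·ρ`). -/
noncomputable def depolarize (p : ℝ) (ρ : Matrix (Fin 2) (Fin 2) ℂ) :
    Matrix (Fin 2) (Fin 2) ℂ :=
  ((p : ℂ) / 2) • (1 : Matrix (Fin 2) (Fin 2) ℂ) + ((1 : ℂ) - (p : ℂ)) • ρ

lemma psd_diag_nonneg {n : Type*} [Fintype n] [DecidableEq n]
    {A : Matrix n n ℂ} (h : A.PosSemidef) (i : n) : 0 ≤ A i i := by
  have := h.dotProduct_mulVec_nonneg (Pi.single i 1)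
  simpa [dotProduct, Matrix.mulVec, Pi.single_apply, Finset.sum_ite_eq,
    Finset.sum_ite_eq'] using this

lemma trace_psd_mul_nonneg {n : Type*} [Fintype n] [DecidableEq n]
    {A B : Matrix n n ℂ} (hA : A.PosSemidef) (hB : B.PosSemidef) :
    0 ≤ ((A * B).trace).re := by
  obtain ⟨C, hC⟩ : ∃ C : Matrix n n ℂ, A = Cᴴ * C := by
    open scoped MatrixOrder in
    obtain ⟨C, hC⟩ := CStarAlgebra.nonneg_iff_eq_star_mul_self.mp hA.nonneg
    exact ⟨C, hC⟩
  have h1 : (A * B).trace = (C * B * Cᴴ).trace := by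
    rw [hC, Matrix.mul_assoc, Matrix.trace_mul_comm, Matrix.mul_assoc]
  have h2 : (C * B * Cᴴ).PosSemidef := hB.mul_mul_conjTranspose_same C
  have h3 : 0 ≤ (C * B * Cᴴ).trace := by
    apply Finset.sum_nonneg
    intro i _
    exact psd_diag_nonneg h2 i
  rw [h1]
  exact (Complex.le_def.mp h3).1

lemma psd_det_re_nonneg {A : Matrix (Fin 2) (Fin 2) ℂ} (h : A.PosSemidef) :
    0 ≤ (A.det).re := by
  obtain ⟨B, hB⟩ : ∃ B : Matrix (Fin 2) (Fin 2) ℂ, A = Bᴴ * B := by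
    open scoped MatrixOrder in
    obtain ⟨B, hB⟩ := CStarAlgebra.nonneg_iff_eq_star_mul_self.mp h.nonneg
    exact ⟨B, hB⟩
  have : A.det = ((Complex.normSq B.det : ℝ) : ℂ) := by
    rw [hB, Matrix.det_mul, Matrix.det_conjTranspose]
    rw [show star B.det = (starRingEnd ℂ) B.det from rfl, ← Complex.normSq_eq_conj_mul_self]
  rw [this]
  simp [Complex.normSq_nonneg]

lemma psd_offdiag_sq {A : Matrix (Fin 2) (Fin 2) ℂ} (h : A.PosSemidef) :
    Complex.normSq (A 0 1) ≤ (A 0 0).re * (A 1 1).re := by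
  have h00 : A 0 0 = ((A 0 0).re : ℂ) :=
    Complex.ext rfl (Complex.le_def.mp (psd_diag_nonneg h 0)).2.symm
  have h11 : A 1 1 = ((A 1 1).re : ℂ) :=
    Complex.ext rfl (Complex.le_def.mp (psd_diag_nonneg h 1)).2.symm
  have h10 : A 1 0 = (starRingEnd ℂ) (A 0 1) := by
    have := congrFun (congrFun h.1 1) 0
    simpa [Matrix.conjTranspose_apply] using this.symm
  have hdet := psd_det_re_nonneg h
  rw [Matrix.det_fin_two, h10, h00, h11] at hdet
  have : (A 0 1 * (starRingEnd ℂ) (A 0 1)) = ((Complex.normSq (A 0 1) : ℝ) : ℂ) :=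
    Complex.mul_conj _
  rw [this] at hdet
  simp only [Complex.sub_re, Complex.mul_re, Complex.ofReal_re, Complex.ofReal_im,
    mul_zero, zero_mul, sub_zero] at hdet
  linarith

lemma eig_scalar (c : ℝ) {B : Matrix (Fin 2) (Fin 2) ℂ} (hB : B.IsHermitian)
    (h : B = (c : ℂ) • 1) (i : Fin 2) : hB.eigenvalues i = c := by
  have key : ∀ x : Fin 2 → ℂ, B *ᵥ x = (c : ℂ) • x := by
    intro x
    rw [h, Matrix.smul_mulVec, Matrix.one_mulVec]
  have hv := (key _).symm.trans (hB.mulVec_eigenvectorBasis i)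
  have hvne : (⇑(hB.eigenvectorBasis i) : Fin 2 → ℂ) ≠ 0 := by
    intro hc
    exact hB.eigenvectorBasis.orthonormal.ne_zero i (by ext j; exact congrFun hc j)
  obtain ⟨j, hj⟩ := Function.ne_iff.mp hvne
  have := congrFun hv j
  simp only [Pi.smul_apply, Complex.real_smul, smul_eq_mul] at this
  have : (c : ℂ) = (hB.eigenvalues i : ℂ) := mul_right_cancel₀ hj this
  exact_mod_cast this.symm

set_option maxHeartbeats 1000000 in
theorem depolarize_qdp_measurement_bound (p d : ℝ) (hp0 : 0 < p) (hp1 : p ≤ 1)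
    (hd0 : 0 < d) (hd1 : d ≤ 1)
    (ρ σ : Matrix (Fin 2) (Fin 2) ℂ)
    (hρ : ρ.PosSemidef) (hρtr : ρ.trace = 1)
    (hσ : σ.PosSemidef) (hσtr : σ.trace = 1)
    (hclose : traceNorm (ρ - σ) / 2 ≤ d)
    (M : Matrix (Fin 2) (Fin 2) ℂ) (hM : M.PosSemidef) (hMI : ((1 : Matrix (Fin 2) (Fin 2) ℂ) - M).PosSemidef) :
    (M * depolarize p ρ).trace.re ≤ (1 + (1 - p) / p * (2 * d)) * (M * depolarize p σ).trace.re := by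
  -- Δ := ρ - σ
  set Δ := ρ - σ with hΔdef
  have hΔh : Δ.IsHermitian := hρ.1.sub hσ.1
  have hΔtr : Δ.trace = 0 := by
    simp [hΔdef, Matrix.trace_sub, hρtr, hσtr]
  -- entries of Δ
  set a : ℝ := (Δ 0 0).re with ha
  have him : (Δ 0 0).im = 0 := by
    have := congrArg Complex.im (congrFun (congrFun hΔh 0) 0)
    rw [Matrix.conjTranspose_apply] at this
    simp [Complex.conj_im] at this
    linarith [this]
  have hΔ00 : Δ 0 0 = (a : ℂ) := Complex.ext rfl (by simp [him])
  have hΔ11 : Δ 1 1 = -(a : ℂ) := by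
    rw [Matrix.trace_fin_two] at hΔtr
    rw [← hΔ00]; linear_combination hΔtr
  set b : ℂ := Δ 0 1 with hb
  have hΔ10 : Δ 1 0 = (starRingEnd ℂ) b := by
    have := congrFun (congrFun hΔh 1) 0
    rw [Matrix.conjTranspose_apply] at this
    exact this.symm
  -- Δᴴ Δ is scalar
  set c : ℝ := a ^ 2 + Complex.normSq b with hc
  have hcnn : 0 ≤ c := add_nonneg (sq_nonneg a) (Complex.normSq_nonneg b)
  have hΔsq : Δᴴ * Δ = (c : ℂ) • 1 := by
    rw [hΔh.eq]
    ext i j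
    fin_cases i <;> fin_cases j <;>
      simp [Matrix.mul_apply, Fin.sum_univ_two, hΔ00, hΔ11, hΔ10, Matrix.one_apply,
        Complex.mul_conj, Complex.normSq_eq_conj_mul_self, hc] <;> push_cast <;> ring
  -- trace norm = 2 √c
  have htN : traceNorm Δ = 2 * Real.sqrt c := by
    unfold traceNorm
    rw [Fin.sum_univ_two, eig_scalar c _ hΔsq 0, eig_scalar c _ hΔsq 1]
    ring
  have hsc : Real.sqrt c ≤ d := by
    rw [htN] at hclose; linarith
  -- entries of M
  set m : ℝ := (M 0 0).re with hm
  set n : ℝ := (M 1 1).re with hn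
  set k : ℂ := M 0 1 with hk
  have hM00 : M 0 0 = (m : ℂ) :=
    Complex.ext rfl (Complex.le_def.mp (psd_diag_nonneg hM 0)).2.symm
  have hM11 : M 1 1 = (n : ℂ) :=
    Complex.ext rfl (Complex.le_def.mp (psd_diag_nonneg hM 1)).2.symm
  have hM10 : M 1 0 = (starRingEnd ℂ) k := by
    have := congrFun (congrFun hM.1 1) 0
    rw [Matrix.conjTranspose_apply] at this
    exact this.symm
  have hmnn : 0 ≤ m := (Complex.le_def.mp (psd_diag_nonneg hM 0)).1
  have hnnn : 0 ≤ n := (Complex.le_def.mp (psd_diag_nonneg hM 1)).1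
  have hknorm : Complex.normSq k ≤ m * n := psd_offdiag_sq hM
  -- trace of M
  have hTrM : M.trace.re = m + n := by
    rw [Matrix.trace_fin_two]
    simp [hm, hn]
  -- trace of M Δ
  have hTrMΔ : (M * Δ).trace.re = (m - n) * a + 2 * ((starRingEnd ℂ) k * b).re := by
    rw [Matrix.trace_fin_two]
    simp only [Matrix.mul_apply, Fin.sum_univ_two]
    rw [hM00, hM11, hM10, hΔ00, hΔ11, hΔ10, ← hb]
    have : (k * (starRingEnd ℂ) b).re = ((starRingEnd ℂ) k * b).re := by
      rw [show k * (starRingEnd ℂ) b = (starRingEnd ℂ) ((starRingEnd ℂ) k * b) by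
        rw [_root_.map_mul]; simp, Complex.conj_re]
    simp [Complex.add_re, Complex.mul_re, this]
    ring
  -- key bound : Tr(MΔ).re ≤ d (m+n)
  have hkey : (M * Δ).trace.re ≤ d * (m + n) := by
    rw [hTrMΔ]
    set e : ℝ := Real.sqrt c with he
    have henn : 0 ≤ e := Real.sqrt_nonneg _
    have he2 : e ^ 2 = a ^ 2 + ‖b‖ ^ 2 := by
      rw [he, Real.sq_sqrt hcnn, hc, Complex.sq_norm]
    have hK2 : ‖k‖ ^ 2 ≤ m * n := by rw [Complex.sq_norm]; exact hknorm
    have h1 : ((starRingEnd ℂ) k * b).re ≤ ‖k‖ * ‖b‖ := by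
      calc ((starRingEnd ℂ) k * b).re ≤ ‖(starRingEnd ℂ) k * b‖ :=
            Complex.re_le_norm _
        _ = ‖k‖ * ‖b‖ := by rw [norm_mul, Complex.norm_conj]
    have h2 : (m - n) * a ≤ |m - n| * |a| := by
      calc (m - n) * a ≤ |(m - n) * a| := le_abs_self _
        _ = |m - n| * |a| := abs_mul _ _
    have hstep : |m - n| * |a| + 2 * (‖k‖ * ‖b‖) ≤ e * (m + n) := by
      nlinarith [sq_nonneg (|m - n| * ‖b‖ - 2 * ‖k‖ * |a|),
        sq_nonneg (e * (m + n) - |m - n| * |a| - 2 * (‖k‖ * ‖b‖)),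
        sq_abs a, sq_abs (m - n), abs_nonneg a, abs_nonneg (m - n),
        norm_nonneg k, norm_nonneg b,
        mul_nonneg (mul_nonneg (abs_nonneg (m-n)) (abs_nonneg a))
          (mul_nonneg (norm_nonneg k) (norm_nonneg b)),
        mul_nonneg henn (add_nonneg hmnn hnnn), sq_nonneg (e * (m+n))]
    have hfin : e * (m + n) ≤ d * (m + n) :=
      mul_le_mul_of_nonneg_right hsc (add_nonneg hmnn hnnn)
    nlinarith
  -- trace identities for the depolarized states
  have hdep : ∀ τ : Matrix (Fin 2) (Fin 2) ℂ,
      (M * depolarize p τ).trace.re = p / 2 * (m + n) + (1 - p) * (M * τ).trace.re := by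
    intro τ
    have : M * depolarize p τ = ((p : ℂ) / 2) • M + ((1 : ℂ) - (p : ℂ)) • (M * τ) := by
      unfold depolarize
      rw [Matrix.mul_add, Matrix.mul_smul, Matrix.mul_one, Matrix.mul_smul]
    rw [this, Matrix.trace_add, Matrix.trace_smul, Matrix.trace_smul]
    simp only [smul_eq_mul, Complex.add_re]
    have e1 : ((p : ℂ) / 2 * M.trace).re = p / 2 * M.trace.re := by
      rw [show (p : ℂ) / 2 = ((p / 2 : ℝ) : ℂ) by push_cast; ring,
        Complex.re_ofReal_mul]
    have e2 : (((1 : ℂ) - (p : ℂ)) * (M * τ).trace).re = (1 - p) * (M * τ).trace.re := by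
      rw [show (1 : ℂ) - (p : ℂ) = ((1 - p : ℝ) : ℂ) by push_cast; ring,
        Complex.re_ofReal_mul]
    rw [e1, e2, hTrM]
  -- difference of traces
  have hdiff : (M * ρ).trace.re - (M * σ).trace.re = (M * Δ).trace.re := by
    have : M * Δ = M * ρ - M * σ := by rw [hΔdef, Matrix.mul_sub]
    rw [this, Matrix.trace_sub, Complex.sub_re]
  -- nonnegativity
  have hBnn : 0 ≤ (M * σ).trace.re := trace_psd_mul_nonneg hM hσ
  -- final arithmetic
  rw [hdep ρ, hdep σ]
  set T : ℝ := m + n with hT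
  set A : ℝ := (M * ρ).trace.re with hA
  set B : ℝ := (M * σ).trace.re with hB
  have hAB : A - B ≤ d * T := by rw [hdiff]; exact hkey
  clear_value T A B
  have hTnn : 0 ≤ T := hT ▸ add_nonneg hmnn hnnn
  have hq : (1 - p) / p * p = 1 - p := by field_simp
  have hqnn : 0 ≤ (1 - p) / p := div_nonneg (by linarith) hp0.le
  have h1 : (1 - p) * (A - B) ≤ (1 - p) * (d * T) :=
    mul_le_mul_of_nonneg_left hAB (by linarith)
  have h3 : 0 ≤ d * ((1 - p) * ((1 - p) * B)) :=
    mul_nonneg hd0.le (mul_nonneg (by linarith) (mul_nonneg (by linarith) hBnn))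
  rw [← mul_le_mul_iff_right₀ hp0]
  have hexp : p * ((1 + (1 - p) / p * (2 * d)) * (p / 2 * T + (1 - p) * B)) =
      (p + (1 - p) * (2 * d)) * (p / 2 * T + (1 - p) * B) := by
    field_simp
  rw [hexp]
  nlinarith [mul_le_mul_of_nonneg_left h1 hp0.le, h3]
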